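/- Let M be a block-diagonal complex matrix with blocks M₁,…,M_h, where M_j is the n_j×n_j cyclic companion matrix of λ^{n_j} − c_j (superdiagonal 1's and c_j in the bottom-left corner), with c_j = 1 for 1 ≤ j ≤ κ and c_j ≠ 1 for κ < j ≤ h. Then the product of the nonzero eigenvalues (with multiplicity) of I − M equals (∏_{j=1}^κ n_j)·(∏_{j=κ+1}^h (1 − c_j)). -/

import Mathlib

open scoped Classical

open Polynomial Matrix

lemma companion_charpoly {n : ℕ} (hn : 1 ≤ n) (c : ℂ) (A : Matrix (Fin n) (Fin n) ℂ)
    (hA : ∀ p q : Fin n, A p q = if (p:ℕ)+1 = (q:ℕ) then 1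
        else if (p:ℕ) = n-1 ∧ (q:ℕ) = 0 then c else 0) :
    A.charpoly = X^n - C c := by
  obtain ⟨m, rfl⟩ : ∃ m, n = m + 1 := ⟨n - 1, (Nat.succ_pred_eq_of_pos hn).symm⟩
  rcases Nat.eq_zero_or_pos m with rfl | hm
  · have h1 : A.charpoly = X - C (A 0 0) := by
      rw [charpoly, det_fin_one, charmatrix_apply_eq]
    rw [h1, hA 0 0]
    norm_num
  -- m ≥ 1
  have hlast0 : (Fin.last m : Fin (m+1)) ≠ 0 := by
    simp only [ne_eq, Fin.ext_iff, Fin.val_last, Fin.val_zero]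
    omega
  -- diagonal of A is zero
  have hdiag : ∀ i : Fin (m+1), A i i = 0 := by
    intro i
    rw [hA, if_neg (by omega), if_neg (by omega)]
  rw [charpoly, det_succ_column_zero]
  have key : ∀ i : Fin (m+1),
      (-1 : ℂ[X])^(i:ℕ) * charmatrix A i 0 *
        det ((charmatrix A).submatrix i.succAbove Fin.succ)
      = (if i = 0 then X^(m+1) else 0) + (if i = Fin.last m then -C c else 0) := by
    intro i
    rcases eq_or_ne i 0 with rfl | hi0
    · rw [if_pos rfl, if_neg hlast0.symm, add_zero]
      have h1 : charmatrix A 0 0 = X := by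
        rw [charmatrix_apply_eq, hdiag, map_zero, sub_zero]
      have h2 : det ((charmatrix A).submatrix (Fin.succAbove 0) Fin.succ) = X^m := by
        rw [Fin.succAbove_zero]
        have ht : ((charmatrix A).submatrix Fin.succ Fin.succ).BlockTriangular id := by
          intro a b hab
          simp only [id] at hab
          have : (a.succ : Fin (m+1)) ≠ b.succ := by
            simp [Fin.ext_iff]; omega
          simp only [submatrix_apply, charmatrix_apply_ne _ _ _ this, hA, neg_eq_zero]
          rw [if_neg, if_neg]
          · exact map_zero C
          · rintro ⟨-, hb⟩; simp [Fin.ext_iff] at hb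
          · simp [Fin.ext_iff]; omega
        rw [det_of_upperTriangular ht]
        have : ∀ a : Fin m, ((charmatrix A).submatrix Fin.succ Fin.succ) a a = X := by
          intro a
          simp only [submatrix_apply, charmatrix_apply_eq, hdiag, map_zero, sub_zero]
        rw [Finset.prod_congr rfl fun a _ => this a, Finset.prod_const]
        simp
      rw [h1, h2, Fin.val_zero, pow_zero, one_mul, ← pow_succ']
    rcases eq_or_ne i (Fin.last m) with rfl | hil
    · rw [if_neg hi0, if_pos rfl, zero_add]
      have h1 : charmatrix A (Fin.last m) 0 = -C c := by
        rw [charmatrix_apply_ne _ _ _ hlast0, hA]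
        simp
      have h2 : det ((charmatrix A).submatrix (Fin.succAbove (Fin.last m)) Fin.succ)
          = (-1)^m := by
        rw [Fin.succAbove_last]
        have ht : ((charmatrix A).submatrix Fin.castSucc Fin.succ).BlockTriangular
            OrderDual.toDual := by
          intro a b hab
          have hab' : (a:ℕ) < (b:ℕ) := hab
          have : (a.castSucc : Fin (m+1)) ≠ b.succ := by
            simp [Fin.ext_iff]; omega
          simp only [submatrix_apply, charmatrix_apply_ne _ _ _ this, hA, neg_eq_zero]
          rw [if_neg, if_neg]
          · exact map_zero C
          · rintro ⟨-, hb⟩; simp [Fin.ext_iff] at hb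
          · simp [Fin.ext_iff]; omega
        rw [det_of_lowerTriangular _ ht]
        have : ∀ a : Fin m, ((charmatrix A).submatrix Fin.castSucc Fin.succ) a a = -1 := by
          intro a
          have hne : (a.castSucc : Fin (m+1)) ≠ a.succ := by
            simp [Fin.ext_iff]
          simp only [submatrix_apply, charmatrix_apply_ne _ _ _ hne, hA]
          rw [if_pos (by simp)]
          simp
        rw [Finset.prod_congr rfl fun a _ => this a, Finset.prod_const]
        simp
      rw [h1, h2, Fin.val_last]
      calc (-1:ℂ[X])^m * (-C c) * (-1)^m = -C c * ((-1)*(-1))^m := by rw [mul_pow]; ring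
        _ = -C c := by norm_num
    · rw [if_neg hi0, if_neg hil, add_zero]
      have h1 : charmatrix A i 0 = 0 := by
        rw [charmatrix_apply_ne _ _ _ hi0, hA]
        rw [if_neg (by simp), if_neg]
        · simp
        · rintro ⟨h1, -⟩
          exact hil (by simp [Fin.ext_iff, h1])
      rw [h1]
      ring
  rw [Finset.sum_congr rfl fun i _ => key i, Finset.sum_add_distrib,
    Finset.sum_ite_eq' _ (0 : Fin (m+1)), Finset.sum_ite_eq' _ (Fin.last m)]
  simp
  ring


lemma companion_charpoly' {ι : Type*} [Fintype ι] [DecidableEq ι] {n : ℕ} (hn : 1 ≤ n)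
    (c : ℂ) (e : Fin n ≃ ι) (A : Matrix ι ι ℂ)
    (hA : ∀ p q : Fin n, A (e p) (e q) = if (p:ℕ)+1 = (q:ℕ) then 1
        else if (p:ℕ) = n-1 ∧ (q:ℕ) = 0 then c else 0) :
    A.charpoly = X^n - C c := by
  have hre : A = reindex e e (A.submatrix e e) := by
    ext p q
    simp [reindex_apply, submatrix_apply]
  rw [hre, charpoly_reindex]
  exact companion_charpoly hn c _ hA

lemma charpoly_congr_inst {S : Type*} (d1 d2 : DecidableEq S) (f1 f2 : Fintype S)
    (A : Matrix S S ℂ) :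
    @Matrix.charpoly ℂ _ S d1 f1 A = @Matrix.charpoly ℂ _ S d2 f2 A := by
  congr! <;> exact Subsingleton.elim _ _

lemma multiset_prod_finset_sum {α ι : Type*} [CommMonoid α] (s : Finset ι)
    (f : ι → Multiset α) : (∑ i ∈ s, f i).prod = ∏ i ∈ s, (f i).prod := by
  induction s using Finset.cons_induction with
  | empty => simp
  | cons a s ha ih => rw [Finset.sum_cons, Finset.prod_cons, Multiset.prod_add, ih]

lemma multiset_map_finset_sum {α β ι : Type*} (g : α → β) (s : Finset ι)
    (f : ι → Multiset α) : (∑ i ∈ s, f i).map g = ∑ i ∈ s, (f i).map g := by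
  induction s using Finset.cons_induction with
  | empty => simp
  | cons a s ha ih => rw [Finset.sum_cons, Finset.sum_cons, Multiset.map_add, ih]

lemma multiset_filter_finset_sum {α ι : Type*} (p : α → Prop) [DecidablePred p]
    (s : Finset ι) (f : ι → Multiset α) :
    (∑ i ∈ s, f i).filter p = ∑ i ∈ s, (f i).filter p := by
  induction s using Finset.cons_induction with
  | empty => simp
  | cons a s ha ih => rw [Finset.sum_cons, Finset.sum_cons, Multiset.filter_add, ih]

lemma prod_map_neg' {α : Type*} [CommRing α] (s : Multiset α) :
    (s.map (fun x => -x)).prod = (-1)^(Multiset.card s) * s.prod := by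
  induction s using Multiset.induction with
  | empty => simp
  | cons a s ih =>
    rw [Multiset.map_cons, Multiset.prod_cons, Multiset.prod_cons, ih, Multiset.card_cons,
      pow_succ]
    ring

lemma prod_one_sub_roots (p : ℂ[X]) (hp : p.Monic) :
    ((p.roots.map (fun r => (1:ℂ) - r)).prod) = p.eval 1 := by
  conv_rhs => rw [(IsAlgClosed.splits p).eq_prod_roots_of_monic hp]
  rw [eval_multiset_prod, Multiset.map_map]
  congr 1
  apply Multiset.map_congr rfl
  intro r _
  simp

set_option maxHeartbeats 1000000 in
theorem main_charpoly
    (h κ : ℕ) (hκ : κ ≤ h)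
    (n : Fin h → ℕ) (hn : ∀ j, 1 ≤ n j)
    (c : Fin h → ℂ)
    (M : Matrix ((j : Fin h) × Fin (n j)) ((j : Fin h) × Fin (n j)) ℂ)
    (hM : ∀ p q : (j : Fin h) × Fin (n j),
      M p q = if p.1 = q.1 then
          (if (p.2 : ℕ) + 1 = (q.2 : ℕ) then 1
            else if (p.2 : ℕ) = n p.1 - 1 ∧ (q.2 : ℕ) = 0 then c p.1 else 0)
        else 0) :
    M.charpoly = ∏ j : Fin h, (X^(n j) - C (c j)) := by
  have hMblock : M.BlockTriangular Sigma.fst := by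
    intro p q hpq
    rw [hM, if_neg hpq.ne']
  rw [hMblock.charpoly]
  refine (Finset.prod_congr ?_ fun a _ => rfl).trans (Finset.prod_congr rfl fun a _ => ?_)
  · ext a
    simp only [Finset.mem_univ, iff_true, Finset.mem_image, true_and]
    exact ⟨⟨a, ⟨0, hn a⟩⟩, rfl⟩
  let e : Fin (n a) ≃ {p : (j : Fin h) × Fin (n j) // p.1 = a} :=
    { toFun := fun i => ⟨⟨a, i⟩, rfl⟩
      invFun := fun p => Fin.cast (congrArg n p.2) p.1.2
      left_inv := fun i => rfl
      right_inv := fun p => by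
        obtain ⟨⟨b, i⟩, hb⟩ := p
        subst hb
        rfl }
  have goal2 : (M.toSquareBlock Sigma.fst a).charpoly = X ^ (n a) - C (c a) :=
    companion_charpoly' (hn a) (c a) e (M.toSquareBlock Sigma.fst a) (fun p q => by
      simp only [Equiv.coe_fn_mk, toSquareBlock_def, hM, e]
      simp)
  exact (charpoly_congr_inst _ _ _ _ _).trans goal2
  /- old
  let e : Fin (n a) ≃ {p : (j : Fin h) × Fin (n j) // p.1 = a} :=
    { toFun := fun i => ⟨⟨a, i⟩, rfl⟩
      invFun := fun p => Fin.cast (congrArg n p.2) p.1.2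
      left_inv := fun i => rfl
      right_inv := fun p => by
        obtain ⟨⟨b, i⟩, hb⟩ := p
        subst hb
        rfl }
  have hre : M.toSquareBlock Sigma.fst a
      = reindex e e ((M.toSquareBlock Sigma.fst a).submatrix e e) := by
    ext p q
    simp [reindex_apply, submatrix_apply]
  have hcomp : ((M.toSquareBlock Sigma.fst a).submatrix e e).charpoly
      = X ^ (n a) - C (c a) := by
    apply companion_charpoly (hn a) (c a)
    intro p q
    simp only [submatrix_apply, toSquareBlock_def, hM, e, Equiv.coe_fn_mk]
    simp
  exact ((congrArg charpoly hre).trans (charpoly_reindex e _)).trans hcomp -/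


/-- **Product of nonzero eigenvalues of `I − π(S̃∞)`.**
Let `M` be block diagonal with cyclic companion blocks of `λ^{n_j} − c_j`, where
`|c_j| = 1`, `c_j = 1` exactly for `j < κ`.  Then the product of the nonzero
roots (with multiplicity) of the characteristic polynomial of `I − M` equals
`(∏_{j<κ} n_j)·(∏_{j≥κ} (1 − c_j))`. -/
theorem det_prime_one_sub_block_companion
    (h κ : ℕ) (hκ : κ ≤ h)
    (n : Fin h → ℕ) (hn : ∀ j, 1 ≤ n j)
    (c : Fin h → ℂ) (hc : ∀ j, ‖c j‖ = 1)
    (hc1 : ∀ j : Fin h, c j = 1 ↔ (j : ℕ) < κ)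
    (M : Matrix ((j : Fin h) × Fin (n j)) ((j : Fin h) × Fin (n j)) ℂ)
    (hM : ∀ p q : (j : Fin h) × Fin (n j),
      M p q = if p.1 = q.1 then
          (if (p.2 : ℕ) + 1 = (q.2 : ℕ) then 1
            else if (p.2 : ℕ) = n p.1 - 1 ∧ (q.2 : ℕ) = 0 then c p.1 else 0)
        else 0) :
    (((1 - M).charpoly.roots.filter (fun z => z ≠ 0)).prod)
      = (∏ j ∈ Finset.univ.filter (fun j : Fin h => (j : ℕ) < κ), (n j : ℂ))
        * ∏ j ∈ Finset.univ.filter (fun j : Fin h => κ ≤ (j : ℕ)), (1 - c j) := by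
  have hchar : M.charpoly = ∏ j : Fin h, (X^(n j) - C (c j)) :=
    main_charpoly h κ hκ n hn c M hM
  -- Step 2: charpoly of 1 - M via the substitution X ↦ 1 - X
  set φ : ℂ[X] →+* ℂ[X] := (aeval (1 - X : ℂ[X])).toRingHom with hφ
  have hφX : φ X = 1 - X := by simp [hφ]
  have hφC : ∀ a : ℂ, φ (C a) = C a := fun a => by
    simp [hφ, aeval_C, algebraMap_eq]
  have hneg : charmatrix (1 - M) = -((charmatrix M).map φ) := by
    refine Matrix.ext fun p q => ?_
    by_cases hpq : p = q
    · subst hpq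
      simp only [charmatrix_apply_eq, Matrix.neg_apply, Matrix.map_apply, map_sub, hφX,
        hφC, Matrix.sub_apply, Matrix.one_apply_eq, C_sub, C_1]
      ring
    · simp only [charmatrix_apply_ne _ _ _ hpq, Matrix.neg_apply, Matrix.map_apply,
        map_neg, hφC, Matrix.sub_apply, Matrix.one_apply_ne hpq, zero_sub, map_neg C,
        neg_neg]
  have hcardI : Fintype.card ((j : Fin h) × Fin (n j)) = ∑ j, n j := by
    simp [Fintype.card_sigma]
  have hdet : (1 - M).charpoly = (-1)^(∑ j, n j) * φ M.charpoly := by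
    rw [Matrix.charpoly, hneg, Matrix.det_neg, hcardI]
    congr 1
    exact (RingHom.map_det φ M.charmatrix).symm
  -- Step 3: roots
  set s : Fin h → Multiset ℂ := fun j => (X^(n j) - C (c j)).roots with hs
  have hmon : ∀ j, ((X:ℂ[X])^(n j) - C (c j)).Monic := fun j =>
    monic_X_pow_sub_C _ (by have := hn j; omega)
  have hfact : ∀ j, ((X:ℂ[X])^(n j) - C (c j)) = ((s j).map fun r => X - C r).prod :=
    fun j => (IsAlgClosed.splits _).eq_prod_roots_of_monic (hmon j)
  have hcards : ∀ j, Multiset.card (s j) = n j := fun j =>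
    (splits_iff_card_roots.mp (IsAlgClosed.splits _)).trans natDegree_X_pow_sub_C
  set t : Fin h → Multiset ℂ := fun j => (s j).map (fun r => 1 - r) with ht
  have hφfact : ∀ j, φ ((X:ℂ[X])^(n j) - C (c j))
      = (-1)^(n j) * ((t j).map fun z => X - C z).prod := by
    intro j
    conv_lhs => rw [hfact j]
    rw [map_multiset_prod, Multiset.map_map]
    have h1 : ((s j).map fun r => φ (X - C r)).prod
        = ((s j).map fun r => -(X - C (1 - r))).prod := by
      congr 1
      apply Multiset.map_congr rfl
      intro r _
      rw [map_sub, hφX, hφC, C_sub, C_1]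
      ring
    rw [show ((s j).map (φ ∘ fun r => X - C r)).prod
        = ((s j).map fun r => φ (X - C r)).prod from rfl, h1]
    have h2 : ((s j).map fun r => -(X - C (1 - r)))
        = (((s j).map fun r => X - C (1 - r)).map fun p => -p) := by
      rw [Multiset.map_map]; rfl
    rw [h2, prod_map_neg', Multiset.card_map, hcards, ht]
    simp only [Multiset.map_map]
    rfl
  have hcharpoly1M : (1 - M).charpoly = ((∑ j, t j).map fun z => X - C z).prod := by
    rw [hdet, hchar, map_prod φ, Finset.prod_congr rfl fun j (_ : j ∈ Finset.univ) => hφfact j,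
      Finset.prod_mul_distrib, Finset.prod_pow_eq_pow_sum, multiset_map_finset_sum,
      multiset_prod_finset_sum, ← mul_assoc, ← mul_pow]
    norm_num
  have hroots : (1 - M).charpoly.roots = ∑ j, t j := by
    rw [hcharpoly1M, roots_multiset_prod_X_sub_C]
  rw [hroots, multiset_filter_finset_sum, multiset_prod_finset_sum]
  -- per-block products
  have hblock : ∀ j : Fin h, ((t j).filter (fun z => z ≠ 0)).prod
      = if (j:ℕ) < κ then (n j : ℂ) else 1 - c j := by
    intro j
    have hfm : (t j).filter (fun z => z ≠ 0)
        = ((s j).filter (fun r => r ≠ 1)).map (fun r => 1 - r) := by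
      rw [ht]
      simp only
      rw [Multiset.filter_map]
      congr 1
      apply Multiset.filter_congr
      intro r _
      refine not_congr ⟨fun h2 => ?_, fun h2 => ?_⟩
      · linear_combination -h2
      · rw [h2]; ring
    rw [hfm]
    by_cases hj : (j:ℕ) < κ
    · -- c j = 1
      rw [if_pos hj]
      have hcj : c j = 1 := (hc1 j).mpr hj
      have hnj : (n j : ℕ) ≠ 0 := by have := hn j; omega
      have hgeom : ((X:ℂ[X])^(n j) - C (c j))
          = (∑ i ∈ Finset.range (n j), X^i) * (X - 1) := by
        rw [hcj, C_1]
        exact (geom_sum_mul X (n j)).symm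
      have hg0 : ((X:ℂ[X])^(n j) - C (c j)) ≠ 0 := X_pow_sub_C_ne_zero (by omega) _
      have hsj : s j = (∑ i ∈ Finset.range (n j), (X:ℂ[X])^i).roots + {1} := by
        rw [hs]
        simp only
        rw [hgeom, roots_mul (hgeom ▸ hg0),
          show ((X:ℂ[X]) - 1) = X - C 1 by rw [C_1], roots_X_sub_C]
      have heval1 : (∑ i ∈ Finset.range (n j), (X:ℂ[X])^i).eval 1 = (n j : ℂ) := by
        simp [eval_geom_sum]
      have hnotroot : ∀ r ∈ (∑ i ∈ Finset.range (n j), (X:ℂ[X])^i).roots, r ≠ 1 := by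
        intro r hr hr1
        subst hr1
        have hgne : (∑ i ∈ Finset.range (n j), (X:ℂ[X])^i) ≠ 0 := fun hcon => by
          rw [hcon] at heval1
          simp at heval1
          exact Nat.cast_ne_zero.mpr hnj heval1.symm
        have := isRoot_of_mem_roots hr
        rw [IsRoot, heval1] at this
        exact Nat.cast_ne_zero.mpr hnj this
      rw [hsj, Multiset.filter_add, Multiset.filter_eq_self.mpr hnotroot,
        Multiset.filter_singleton, if_neg (by simp), Multiset.empty_eq_zero, add_zero,
        ← heval1]
      exact prod_one_sub_roots _ (monic_geom_sum_X hnj)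
    · -- c j ≠ 1
      rw [if_neg hj]
      have hcj : c j ≠ 1 := fun hcon => hj ((hc1 j).mp hcon)
      have hfull : (s j).filter (fun r => r ≠ 1) = s j := by
        apply Multiset.filter_eq_self.mpr
        intro r hr hr1
        subst hr1
        have := isRoot_of_mem_roots hr
        rw [IsRoot, eval_sub, eval_pow, eval_X, eval_C, one_pow, sub_eq_zero] at this
        exact hcj this.symm
      rw [hfull]
      have := prod_one_sub_roots _ (hmon j)
      rw [hs] at *
      rw [this]
      rw [eval_sub, eval_pow, eval_X, eval_C, one_pow]
  rw [Finset.prod_congr rfl fun j (_ : j ∈ Finset.univ) => hblock j]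
  rw [← Finset.prod_filter_mul_prod_filter_not Finset.univ (fun j : Fin h => (j:ℕ) < κ)
    (fun j : Fin h => if (j:ℕ) < κ then (n j : ℂ) else 1 - c j)]
  congr 1
  · exact Finset.prod_congr rfl fun j hj => if_pos (Finset.mem_filter.mp hj).2
  · refine Finset.prod_congr (by ext j; simp [not_lt]) fun j hj => ?_
    have := (Finset.mem_filter.mp hj).2
    exact if_neg (by omega)
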